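/- Let X₁, X₂, … be i.i.d. uniform on a finite alphabet of size N, write p = 1/N, fix distinct targets b_i ≠ b_j, and let R_i, R_j be the first hitting times of b_i and b_j respectively. Then for any x ≥ 1, P(R_j = y | R_i = x) = (p/(1−p))((1−2p)/(1−p))^{y−1} for y < x, and P(R_j = y | R_i = x) = ((1−2p)/(1−p))^{x−1}(1−p)^{y−x−1} p for y > x. -/

import Mathlib

open MeasureTheory ProbabilityTheory

lemma nat_sInf_eq {S : Set ℕ} {x : ℕ} (hx : x ≠ 0) :
    sInf S = x ↔ x ∈ S ∧ ∀ t < x, t ∉ S := by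
  constructor
  · rintro rfl
    have hne : S.Nonempty := by
      by_contra h
      rw [Set.not_nonempty_iff_eq_empty] at h
      simp [h, Nat.sInf_empty] at hx
    exact ⟨Nat.sInf_mem hne, fun t ht hts => absurd (Nat.sInf_le hts) (by omega)⟩
  · rintro ⟨hxS, hlt⟩
    have h1 : sInf S ≤ x := Nat.sInf_le hxS
    have h2 : sInf S ∈ S := Nat.sInf_mem ⟨x, hxS⟩
    by_contra h
    exact hlt _ (by omega) h2

theorem hitting_time_conditional_distribution
    {Ω : Type*} [MeasurableSpace Ω] (μ : Measure Ω) [IsProbabilityMeasure μ]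
    (N : ℕ) (hN : 3 ≤ N)
    (X : ℕ → Ω → Fin N)
    (hmeas : ∀ i, Measurable (X i))
    (hindep : iIndepFun X μ)
    (hunif : ∀ i (a : Fin N), μ {ω | X i ω = a} = 1 / N)
    (bi bj : Fin N) (hbij : bi ≠ bj)
    (Ri Rj : Ω → ℕ)
    (hRi : ∀ ω, Ri ω = sInf {t | 1 ≤ t ∧ X t ω = bi})
    (hRj : ∀ ω, Rj ω = sInf {t | 1 ≤ t ∧ X t ω = bj})
    (p : ℝ) (hp : p = 1 / N) :
    ∀ x : ℕ, 1 ≤ x → ∀ y : ℕ, 1 ≤ y →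
      (y < x →
        μ {ω | Ri ω = x ∧ Rj ω = y} =
          ENNReal.ofReal ((p / (1 - p)) * ((1 - 2 * p) / (1 - p)) ^ (y - 1)) *
            μ {ω | Ri ω = x}) ∧
      (x < y →
        μ {ω | Ri ω = x ∧ Rj ω = y} =
          ENNReal.ofReal (((1 - 2 * p) / (1 - p)) ^ (x - 1) * (1 - p) ^ (y - x - 1) * p) *
            μ {ω | Ri ω = x}) := by
  -- basic real facts
  have hN3 : (3 : ℝ) ≤ N := by exact_mod_cast hN
  have hNpos : (0 : ℝ) < N := by linarith
  have hp0 : 0 < p := by rw [hp]; positivity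
  have hp3 : p ≤ 1/3 := by
    rw [hp, div_le_div_iff₀ hNpos (by norm_num)]; linarith
  have h1p : 0 < 1 - p := by linarith
  have h12p : 0 < 1 - 2*p := by linarith
  -- single-coordinate measures
  have hsing : ∀ t (a : Fin N), μ (X t ⁻¹' {a}) = ENNReal.ofReal p := by
    intro t a
    have : X t ⁻¹' {a} = {ω | X t ω = a} := by ext ω; simp
    rw [this, hunif, hp, ENNReal.ofReal_div_of_pos hNpos, ENNReal.ofReal_one,
      ENNReal.ofReal_natCast]
  have hcompl : ∀ t (a : Fin N), μ (X t ⁻¹' ({a}ᶜ)) = ENNReal.ofReal (1 - p) := by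
    intro t a
    rw [Set.preimage_compl, measure_compl ((hmeas t) (by exact MeasurableSet.of_discrete)) (measure_ne_top μ _),
      hsing, measure_univ, ENNReal.ofReal_sub _ hp0.le, ENNReal.ofReal_one]
  have hpair : ∀ t (a c : Fin N), a ≠ c →
      μ (X t ⁻¹' (({a, c} : Set (Fin N))ᶜ)) = ENNReal.ofReal (1 - 2*p) := by
    intro t a c hac
    have hmsp : MeasurableSet (X t ⁻¹' ({a, c} : Set (Fin N))) :=
      (hmeas t) MeasurableSet.of_discrete
    have hmu2 : μ (X t ⁻¹' ({a, c} : Set (Fin N))) = ENNReal.ofReal (2*p) := by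
      have hd : Disjoint (X t ⁻¹' {a}) (X t ⁻¹' {c}) := by
        apply Set.disjoint_left.mpr
        intro ω h1 h2
        simp only [Set.mem_preimage, Set.mem_singleton_iff] at h1 h2
        exact hac (h1 ▸ h2)
      have : ({a, c} : Set (Fin N)) = {a} ∪ {c} := Set.insert_eq _ _
      rw [this, Set.preimage_union, measure_union hd ((hmeas t) MeasurableSet.of_discrete),
        hsing, hsing, ← ENNReal.ofReal_add hp0.le hp0.le]
      ring_nf
    rw [Set.preimage_compl, measure_compl hmsp (measure_ne_top μ _), hmu2, measure_univ,
      ENNReal.ofReal_sub _ (by linarith), ENNReal.ofReal_one]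
  -- product formula
  have key : ∀ (g : ℕ → Set (Fin N)) (n : ℕ),
      μ (⋂ t ∈ Finset.Icc 1 n, X t ⁻¹' g t) = ∏ t ∈ Finset.Icc 1 n, μ (X t ⁻¹' g t) := by
    intro g n
    exact hindep.meas_biInter (fun t _ => ⟨g t, MeasurableSet.of_discrete, rfl⟩)
  -- measure of {Ri = x}
  have hRiset : ∀ x : ℕ, 1 ≤ x → {ω | Ri ω = x} =
      ⋂ t ∈ Finset.Icc 1 x, X t ⁻¹' (if t = x then ({bi} : Set (Fin N)) else {bi}ᶜ) := by
    intro x hx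
    ext ω
    simp only [Set.mem_setOf_eq, hRi, nat_sInf_eq (by omega : x ≠ 0), Set.mem_iInter,
      Finset.mem_Icc, Set.mem_preimage]
    constructor
    · rintro ⟨⟨_, hxb⟩, hlt⟩
      intro t ⟨ht1, htx⟩
      by_cases h : t = x
      · simp [h, hxb]
      · have := hlt t (by omega)
        simp only [Set.mem_setOf_eq, not_and] at this
        simp [h, this ht1]
    · intro h
      have hx' := h x ⟨hx, le_refl x⟩
      simp only [if_pos rfl, Set.mem_singleton_iff] at hx'
      refine ⟨⟨hx, hx'⟩, fun t ht => ?_⟩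
      simp only [Set.mem_setOf_eq, not_and]
      intro ht1
      have := h t ⟨ht1, by omega⟩
      simp only [if_neg (by omega : ¬ t = x), Set.mem_compl_iff, Set.mem_singleton_iff] at this
      exact this
  have hRimeas : ∀ x : ℕ, 1 ≤ x →
      μ {ω | Ri ω = x} = ENNReal.ofReal ((1-p)^(x-1) * p) := by
    intro x hx
    rw [hRiset x hx, key]
    have hsplit : Finset.Icc 1 x = Finset.Ico 1 (x+1) := by rw [Finset.Ico_add_one_right_eq_Icc]
    rw [hsplit, Finset.prod_Ico_succ_top (by omega)]
    have hc : ∀ t ∈ Finset.Ico 1 x,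
        μ (X t ⁻¹' (if t = x then ({bi} : Set (Fin N)) else {bi}ᶜ)) = ENNReal.ofReal (1-p) := by
      intro t ht
      simp only [Finset.mem_Ico] at ht
      rw [if_neg (by omega), hcompl]
    rw [Finset.prod_congr rfl hc, Finset.prod_const, Nat.card_Ico, if_pos rfl, hsing,
      ← ENNReal.ofReal_pow (by linarith), ← ENNReal.ofReal_mul (by positivity)]
  -- joint measure for v < u
  have hjoint : ∀ (bu bv : Fin N), bu ≠ bv → ∀ u v : ℕ, 1 ≤ v → v < u →
      μ {ω | sInf {t | 1 ≤ t ∧ X t ω = bu} = u ∧ sInf {t | 1 ≤ t ∧ X t ω = bv} = v} =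
        ENNReal.ofReal ((1-2*p)^(v-1) * p * ((1-p)^(u-v-1) * p)) := by
    intro bu bv hne u v hv hvu
    set g : ℕ → Set (Fin N) := fun t =>
      if t = u then {bu} else if t = v then {bv}
      else if t < v then ({bu, bv} : Set (Fin N))ᶜ else {bu}ᶜ with hg
    have hset : {ω | sInf {t | 1 ≤ t ∧ X t ω = bu} = u ∧ sInf {t | 1 ≤ t ∧ X t ω = bv} = v} =
        ⋂ t ∈ Finset.Icc 1 u, X t ⁻¹' g t := by
      ext ω
      simp only [Set.mem_setOf_eq, nat_sInf_eq (by omega : u ≠ 0),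
        nat_sInf_eq (by omega : v ≠ 0), Set.mem_iInter, Finset.mem_Icc, Set.mem_preimage, hg]
      constructor
      · rintro ⟨⟨⟨_, hub⟩, hltu⟩, ⟨_, hvb⟩, hltv⟩
        rintro t ⟨ht1, htu⟩
        by_cases h1 : t = u
        · simp [h1, hub]
        · have hu' := hltu t (by omega)
          simp only [Set.mem_setOf_eq, not_and] at hu'
          have hu'' := hu' ht1
          by_cases h2 : t = v
          · rw [if_neg h1, if_pos h2]; simp [h2, hvb]
          · by_cases h3 : t < v
            · have hv' := hltv t h3
              simp only [Set.mem_setOf_eq, not_and] at hv'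
              have hv'' := hv' ht1
              simp only [if_neg h1, if_neg h2, if_pos h3, Set.mem_compl_iff,
                Set.mem_insert_iff, Set.mem_singleton_iff]
              tauto
            · simp [h1, h2, h3, hu'']
      · intro h
        have huu := h u ⟨by omega, le_refl u⟩
        rw [if_pos rfl] at huu
        have hvv := h v ⟨hv, by omega⟩
        rw [if_neg (by omega), if_pos rfl] at hvv
        refine ⟨⟨⟨by omega, huu⟩, fun t ht => ?_⟩, ⟨hv, hvv⟩, fun t ht => ?_⟩
        · simp only [Set.mem_setOf_eq, not_and]
          intro ht1
          have h' := h t ⟨ht1, by omega⟩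
          by_cases h2 : t = v
          · rw [if_neg (by omega), if_pos h2] at h'
            simp only [Set.mem_singleton_iff] at h'
            rw [h']; exact fun hc => hne hc.symm
          · by_cases h3 : t < v
            · rw [if_neg (by omega), if_neg h2, if_pos h3] at h'
              simp only [Set.mem_compl_iff, Set.mem_insert_iff, Set.mem_singleton_iff] at h'
              tauto
            · rw [if_neg (by omega), if_neg h2, if_neg h3] at h'
              simpa using h'
        · simp only [Set.mem_setOf_eq, not_and]
          intro ht1
          have h' := h t ⟨ht1, by omega⟩
          rw [if_neg (by omega), if_neg (by omega), if_pos ht] at h'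
          simp only [Set.mem_compl_iff, Set.mem_insert_iff, Set.mem_singleton_iff] at h'
          tauto
    rw [hset, key]
    have hsplit : Finset.Icc 1 u = Finset.Ico 1 (u+1) := by rw [Finset.Ico_add_one_right_eq_Icc]
    rw [hsplit, Finset.prod_Ico_succ_top (by omega),
      ← Finset.prod_Ico_consecutive _ (by omega : 1 ≤ v) (by omega : v ≤ u),
      Finset.prod_eq_prod_Ico_succ_bot (by omega : v < u)]
    have hc1 : ∀ t ∈ Finset.Ico 1 v, μ (X t ⁻¹' g t) = ENNReal.ofReal (1-2*p) := by
      intro t ht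
      simp only [Finset.mem_Ico] at ht
      rw [hg]
      simp only [if_neg (by omega : ¬ t = u), if_neg (by omega : ¬ t = v),
        if_pos (by omega : t < v)]
      exact hpair t bu bv hne
    have hc2 : ∀ t ∈ Finset.Ico (v+1) u, μ (X t ⁻¹' g t) = ENNReal.ofReal (1-p) := by
      intro t ht
      simp only [Finset.mem_Ico] at ht
      rw [hg]
      simp only [if_neg (by omega : ¬ t = u), if_neg (by omega : ¬ t = v),
        if_neg (by omega : ¬ t < v)]
      exact hcompl t bu
    have hgv : μ (X v ⁻¹' g v) = ENNReal.ofReal p := by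
      rw [hg]; simp only [if_neg (by omega : ¬ v = u), if_pos rfl]; exact hsing v bv
    have hgu : μ (X u ⁻¹' g u) = ENNReal.ofReal p := by
      rw [hg]; simp only [if_pos rfl]; exact hsing u bu
    rw [Finset.prod_congr rfl hc1, Finset.prod_congr rfl hc2, Finset.prod_const,
      Finset.prod_const, Nat.card_Ico, Nat.card_Ico, hgv, hgu,
      ← ENNReal.ofReal_pow (by linarith), ← ENNReal.ofReal_pow (by linarith),
      ← ENNReal.ofReal_mul (by positivity), ← ENNReal.ofReal_mul (by positivity),
      ← ENNReal.ofReal_mul (by positivity)]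
    congr 1
    have : u - (v+1) = u - v - 1 := by omega
    rw [this]; ring
  intro x hx y hy
  constructor
  · -- case y < x
    intro hyx
    have hE : {ω | Ri ω = x ∧ Rj ω = y} =
        {ω | sInf {t | 1 ≤ t ∧ X t ω = bi} = x ∧ sInf {t | 1 ≤ t ∧ X t ω = bj} = y} := by
      ext ω; rw [Set.mem_setOf_eq, Set.mem_setOf_eq, hRi, hRj]
    rw [hE, hjoint bi bj hbij x y hy hyx, hRimeas x hx,
      ← ENNReal.ofReal_mul (by positivity)]
    congr 1
    have hx1 : x - 1 = (y - 1) + (x - y - 1) + 1 := by omega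
    rw [hx1, div_pow, pow_add, pow_add, pow_one]
    field_simp
  · intro hxy
    have hE : {ω | Ri ω = x ∧ Rj ω = y} =
        {ω | sInf {t | 1 ≤ t ∧ X t ω = bj} = y ∧ sInf {t | 1 ≤ t ∧ X t ω = bi} = x} := by
      ext ω; rw [Set.mem_setOf_eq, Set.mem_setOf_eq, hRi, hRj]; exact and_comm
    rw [hE, hjoint bj bi hbij.symm y x hx hxy, hRimeas x hx,
      ← ENNReal.ofReal_mul (by positivity)]
    congr 1
    rw [div_pow]
    field_simp
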